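/- Let C ≥ 2 be an integer, λ > 0 a real number, X a type, A and B nonempty finite subsets of X with A ∩ B = ∅, and y : X → Fin C. Then there exists ε > 0 (depending only on C, λ, and the cardinalities of A and B) such that for every function f : X → (Fin C → ℝ) whose value f x is a positive probability vector on Fin C for every x ∈ A ∪ B, if L(f) − L_0 < ε then the minimum over a ∈ A of MSP(f a) is strictly greater than the maximum over b ∈ B of MSP(f b). -/

import Mathlib

/-- `p` is a positive probability vector on `Fin C`. -/
def IsPosProbVec {C : ℕ} (p : Fin C → ℝ) : Prop :=
  (∀ i, 0 < p i) ∧ ∑ i, p i = 1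

/-- The uniform probability vector on `Fin C`. -/
noncomputable def unif (C : ℕ) : Fin C → ℝ := fun _ => 1 / (C : ℝ)

/-- The smoothed vector `p_λ`, `p_λ i = (p i + λ/C)/(1 + λ)`. -/
noncomputable def smooth {C : ℕ} (lam : ℝ) (p : Fin C → ℝ) : Fin C → ℝ :=
  fun i => (p i + lam / (C : ℝ)) / (1 + lam)

/-- Maximum softmax probability: the maximum of `p` over `Fin C`. -/
noncomputable def MSP {C : ℕ} (p : Fin C → ℝ) : ℝ := ⨆ i, p i

/-- Cross-entropy `H(a, b) = −∑ i, a i * log (b i)`. -/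
noncomputable def crossEnt {C : ℕ} (a b : Fin C → ℝ) : ℝ :=
  -∑ i, a i * Real.log (b i)

/-- The one-hot probability vector at `y`. -/
def oneHot {C : ℕ} (y : Fin C) : Fin C → ℝ := fun i => if i = y then 1 else 0

/-- The DCM loss `L(f)`. -/
noncomputable def dcmLoss {C : ℕ} {X : Type*} (A B : Finset X) (y : X → Fin C)
    (lam : ℝ) (f : X → (Fin C → ℝ)) : ℝ :=
  (∑ x ∈ A, (crossEnt (oneHot (y x)) (f x) + lam * crossEnt (unif C) (f x))) +
    lam * ∑ x ∈ B, crossEnt (unif C) (f x)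

/-- The optimal DCM loss `L_0`. -/
noncomputable def dcmOptLoss {C : ℕ} {X : Type*} (A B : Finset X) (y : X → Fin C)
    (lam : ℝ) : ℝ :=
  (∑ x ∈ A, (crossEnt (oneHot (y x)) (smooth lam (oneHot (y x))) +
      lam * crossEnt (unif C) (smooth lam (oneHot (y x))))) +
    lam * (B.card : ℝ) * Real.log (C : ℝ)

/-! ### Auxiliary lemmas -/

/-- The one-dimensional "partial KL" function `ψ(q,t) = q log(q/t) + t − q`. -/
noncomputable def psiKL (q t : ℝ) : ℝ := q * Real.log (q / t) + t - q

lemma psiKL_nonneg {q t : ℝ} (hq : 0 < q) (ht : 0 < t) : 0 ≤ psiKL q t := by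
  have h := Real.log_le_sub_one_of_pos (show (0:ℝ) < t / q by positivity)
  have hlog : Real.log (q / t) = - Real.log (t / q) := by
    rw [← Real.log_inv]; congr 1; rw [inv_div]
  have h2 : q * Real.log (t / q) ≤ q * (t / q - 1) :=
    mul_le_mul_of_nonneg_left h hq.le
  have h3 : q * (t / q - 1) = t - q := by field_simp
  unfold psiKL
  nlinarith

lemma psiKL_pos {q t : ℝ} (hq : 0 < q) (ht : 0 < t) (hne : t ≠ q) : 0 < psiKL q t := by
  have h := Real.log_lt_sub_one_of_pos (show (0:ℝ) < t / q by positivity)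
    (by intro h; apply hne; field_simp at h; linarith)
  have hlog : Real.log (q / t) = - Real.log (t / q) := by
    rw [← Real.log_inv]; congr 1; rw [inv_div]
  have h2 : q * Real.log (t / q) < q * (t / q - 1) :=
    mul_lt_mul_of_pos_left h hq
  have h3 : q * (t / q - 1) = t - q := by field_simp
  unfold psiKL
  nlinarith

/-- Monotonicity away from the minimum: if `t` is on the far side of `τ` from `q`,
then `psiKL q τ ≤ psiKL q t`. -/
lemma psiKL_mono {q τ t : ℝ} (hq : 0 < q) (hτ : 0 < τ) (ht : 0 < t)
    (hsign : 0 ≤ (τ - q) * (t - τ)) : psiKL q τ ≤ psiKL q t := by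
  have h := Real.log_le_sub_one_of_pos (show (0:ℝ) < t / τ by positivity)
  have h2 : q * Real.log (t / τ) ≤ q * (t / τ - 1) :=
    mul_le_mul_of_nonneg_left h hq.le
  have hlq : Real.log (q / t) = Real.log q - Real.log t :=
    Real.log_div (ne_of_gt hq) (ne_of_gt ht)
  have hlτ : Real.log (q / τ) = Real.log q - Real.log τ :=
    Real.log_div (ne_of_gt hq) (ne_of_gt hτ)
  have hltτ : Real.log (t / τ) = Real.log t - Real.log τ :=
    Real.log_div (ne_of_gt ht) (ne_of_gt hτ)
  unfold psiKL
  rw [hlq, hlτ]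
  rw [hltτ] at h2
  have key : q * (t / τ - 1) * τ = q * t - q * τ := by field_simp
  nlinarith [mul_le_mul_of_nonneg_right h2 hτ.le]

/-- Gibbs-type bound with one coordinate extracted. -/
lemma crossEnt_sub_ge {C : ℕ} {q p : Fin C → ℝ} (hq : IsPosProbVec q)
    (hp : IsPosProbVec p) (j : Fin C) :
    psiKL (q j) (p j) ≤ crossEnt q p - crossEnt q q := by
  have hid : crossEnt q p - crossEnt q q = ∑ i, q i * Real.log (q i / p i) := by
    unfold crossEnt
    rw [neg_sub_neg, ← Finset.sum_sub_distrib]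
    apply Finset.sum_congr rfl; intro i _
    rw [Real.log_div (ne_of_gt (hq.1 i)) (ne_of_gt (hp.1 i))]; ring
  rw [hid]
  have key : ∀ i, (q i - p i) + (if i = j then psiKL (q j) (p j) else 0)
      ≤ q i * Real.log (q i / p i) := by
    intro i
    by_cases h : i = j
    · subst h; rw [if_pos rfl]; unfold psiKL; linarith
    · simp only [h, if_false, add_zero]
      have := psiKL_nonneg (hq.1 i) (hp.1 i)
      unfold psiKL at this; linarith
  calc psiKL (q j) (p j)
      = ∑ i, ((q i - p i) + (if i = j then psiKL (q j) (p j) else 0)) := by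
        rw [Finset.sum_add_distrib, Finset.sum_sub_distrib, hq.2, hp.2,
          Finset.sum_ite_eq' Finset.univ j (fun _ => psiKL (q j) (p j))]
        simp
    _ ≤ ∑ i, q i * Real.log (q i / p i) := Finset.sum_le_sum (fun i _ => key i)

lemma smooth_crossEnt {C : ℕ} (lam : ℝ) (hlam : 0 < lam) (k : Fin C) (p : Fin C → ℝ) :
    (1 + lam) * crossEnt (smooth lam (oneHot k)) p
      = crossEnt (oneHot k) p + lam * crossEnt (unif C) p := by
  have h1 : (1:ℝ) + lam ≠ 0 := by linarith
  unfold crossEnt smooth unif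
  rw [mul_neg, mul_neg, ← neg_add, Finset.mul_sum, Finset.mul_sum,
    ← Finset.sum_add_distrib]
  congr 1
  apply Finset.sum_congr rfl; intro i _
  field_simp

lemma unif_posProb {C : ℕ} (hC : 0 < C) : IsPosProbVec (unif C) := by
  have hC' : (0:ℝ) < C := by exact_mod_cast hC
  constructor
  · intro i; unfold unif; positivity
  · unfold unif; rw [Finset.sum_const, Finset.card_univ, Fintype.card_fin]
    rw [nsmul_eq_mul]; field_simp

lemma smooth_posProb {C : ℕ} (hC : 0 < C) {lam : ℝ} (hlam : 0 < lam) (k : Fin C) :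
    IsPosProbVec (smooth lam (oneHot k)) := by
  have hC' : (0:ℝ) < C := by exact_mod_cast hC
  constructor
  · intro i; unfold smooth oneHot
    have : (0:ℝ) ≤ if i = k then (1:ℝ) else 0 := by positivity
    have h2 : (0:ℝ) < lam / C := by positivity
    apply div_pos (by linarith) (by linarith)
  · unfold smooth oneHot
    rw [← Finset.sum_div, Finset.sum_add_distrib,
      Finset.sum_ite_eq' Finset.univ k (fun _ => (1:ℝ)),
      Finset.sum_const, Finset.card_univ, Fintype.card_fin]
    simp only [Finset.mem_univ, if_true, nsmul_eq_mul]
    field_simp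

lemma crossEnt_unif_self {C : ℕ} (hC : 0 < C) :
    crossEnt (unif C) (unif C) = Real.log C := by
  have hC' : (0:ℝ) < C := by exact_mod_cast hC
  unfold crossEnt unif
  rw [Finset.sum_const, Finset.card_univ, Fintype.card_fin]
  rw [Real.log_div one_ne_zero (ne_of_gt hC'), Real.log_one]
  rw [nsmul_eq_mul]; field_simp; ring

/-- Low DCM loss implies separation: there is `ε > 0` such that any predictor
whose loss is within `ε` of optimal assigns strictly larger maximum softmax
probability to every point of `A` than to every point of `B`. -/
theorem low_loss_implies_separation
    (C : ℕ) (hC : 2 ≤ C) (lam : ℝ) (hlam : 0 < lam)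
    {X : Type*} [DecidableEq X] (A B : Finset X) (hA : A.Nonempty) (hB : B.Nonempty)
    (hAB : Disjoint A B) (y : X → Fin C) :
    ∃ ε > 0, ∀ f : X → (Fin C → ℝ),
      (∀ x ∈ A ∪ B, IsPosProbVec (f x)) →
      dcmLoss A B y lam f - dcmOptLoss A B y lam < ε →
      A.inf' hA (fun a => MSP (f a)) > B.sup' hB (fun b => MSP (f b)) := by
  have hC0 : 0 < C := by omega
  have hCr : (0:ℝ) < C := by exact_mod_cast hC0
  have hCr2 : (2:ℝ) ≤ C := by exact_mod_cast hC
  have hlam1 : (0:ℝ) < 1 + lam := by linarith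
  set u : ℝ := 1 / (C : ℝ) with hu_def
  set m : ℝ := (1 + lam / (C : ℝ)) / (1 + lam) with hm_def
  have hu : 0 < u := by positivity
  have hm : 0 < m := by
    apply div_pos (by positivity) hlam1
  have hum : u < m := by
    rw [hu_def, hm_def, div_lt_div_iff₀ hCr hlam1]
    have h1 : (1 + lam / C) * C = C + lam := by field_simp
    rw [h1]; linarith
  set τ : ℝ := (u + m) / 2 with hτ_def
  have hτ : 0 < τ := by positivity
  have huτ : u < τ := by rw [hτ_def]; linarith
  have hτm : τ < m := by rw [hτ_def]; linarith
  have hεA : 0 < (1 + lam) * psiKL m τ :=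
    mul_pos hlam1 (psiKL_pos hm hτ (ne_of_lt hτm))
  have hεB : 0 < lam * psiKL u τ :=
    mul_pos hlam (psiKL_pos hu hτ (ne_of_gt huτ))
  refine ⟨min ((1 + lam) * psiKL m τ) (lam * psiKL u τ), lt_min hεA hεB, ?_⟩
  intro f hf hloss
  -- positivity facts
  have hfA : ∀ a ∈ A, IsPosProbVec (f a) := fun a ha => hf a (Finset.mem_union_left _ ha)
  have hfB : ∀ b ∈ B, IsPosProbVec (f b) := fun b hb => hf b (Finset.mem_union_right _ hb)
  have hUp := unif_posProb (C := C) hC0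
  -- per-point excess losses
  set g : X → ℝ := fun x =>
    crossEnt (smooth lam (oneHot (y x))) (f x)
      - crossEnt (smooth lam (oneHot (y x))) (smooth lam (oneHot (y x))) with hg_def
  set h : X → ℝ := fun x => crossEnt (unif C) (f x) - Real.log C with hh_def
  have hqm : ∀ x : X, smooth lam (oneHot (y x)) (y x) = m := by
    intro x; unfold smooth oneHot; rw [if_pos rfl]
  have huu : ∀ j : Fin C, unif C j = u := fun j => rfl
  -- lower bounds for g
  have hg_lb : ∀ a ∈ A, psiKL m (f a (y a)) ≤ g a := by
    intro a ha
    have := crossEnt_sub_ge (smooth_posProb hC0 hlam (y a)) (hfA a ha) (y a)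
    rw [hqm a] at this
    exact this
  have hg_nonneg : ∀ a ∈ A, 0 ≤ g a := by
    intro a ha
    exact le_trans (psiKL_nonneg hm ((hfA a ha).1 (y a))) (hg_lb a ha)
  -- lower bounds for h
  have hh_lb : ∀ b ∈ B, ∀ j : Fin C, psiKL u (f b j) ≤ h b := by
    intro b hb j
    have := crossEnt_sub_ge hUp (hfB b hb) j
    rw [huu j, crossEnt_unif_self hC0] at this
    exact this
  have hh_nonneg : ∀ b ∈ B, 0 ≤ h b := by
    intro b hb
    exact le_trans (psiKL_nonneg hu ((hfB b hb).1 ⟨0, hC0⟩)) (hh_lb b hb ⟨0, hC0⟩)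
  -- decomposition of the loss gap
  have hdecomp : dcmLoss A B y lam f - dcmOptLoss A B y lam
      = ∑ x ∈ A, (1 + lam) * g x + lam * ∑ x ∈ B, h x := by
    have e1 : ∑ x ∈ A, (1 + lam) * g x
        = ∑ x ∈ A, (crossEnt (oneHot (y x)) (f x) + lam * crossEnt (unif C) (f x))
          - ∑ x ∈ A, (crossEnt (oneHot (y x)) (smooth lam (oneHot (y x))) +
              lam * crossEnt (unif C) (smooth lam (oneHot (y x)))) := by
      rw [← Finset.sum_sub_distrib]
      apply Finset.sum_congr rfl; intro x _
      rw [hg_def]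
      rw [← smooth_crossEnt lam hlam (y x) (f x),
        ← smooth_crossEnt lam hlam (y x) (smooth lam (oneHot (y x)))]
      ring
    have e2 : ∑ x ∈ B, h x
        = ∑ x ∈ B, crossEnt (unif C) (f x) - (B.card : ℝ) * Real.log C := by
      rw [hh_def, Finset.sum_sub_distrib, Finset.sum_const, nsmul_eq_mul]
    unfold dcmLoss dcmOptLoss
    rw [e1, e2]
    ring
  have htotal : ∑ x ∈ A, (1 + lam) * g x + lam * ∑ x ∈ B, h x
      < min ((1 + lam) * psiKL m τ) (lam * psiKL u τ) := by
    rw [← hdecomp]; exact hloss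
  have hsumA_nonneg : 0 ≤ ∑ x ∈ A, (1 + lam) * g x :=
    Finset.sum_nonneg (fun x hx => mul_nonneg hlam1.le (hg_nonneg x hx))
  have hsumB_nonneg : 0 ≤ lam * ∑ x ∈ B, h x :=
    mul_nonneg hlam.le (Finset.sum_nonneg hh_nonneg)
  -- each a ∈ A has large MSP
  have hA_big : ∀ a ∈ A, τ < MSP (f a) := by
    intro a ha
    have h1 : (1 + lam) * g a ≤ ∑ x ∈ A, (1 + lam) * g x :=
      Finset.single_le_sum (fun x hx => mul_nonneg hlam1.le (hg_nonneg x hx)) ha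
    have h2 : (1 + lam) * g a < (1 + lam) * psiKL m τ := by
      calc (1 + lam) * g a ≤ ∑ x ∈ A, (1 + lam) * g x := h1
        _ ≤ ∑ x ∈ A, (1 + lam) * g x + lam * ∑ x ∈ B, h x := by linarith
        _ < min ((1 + lam) * psiKL m τ) (lam * psiKL u τ) := htotal
        _ ≤ (1 + lam) * psiKL m τ := min_le_left _ _
    have h3 : g a < psiKL m τ := lt_of_mul_lt_mul_left h2 hlam1.le
    have h4 : psiKL m (f a (y a)) < psiKL m τ := lt_of_le_of_lt (hg_lb a ha) h3
    have h5 : τ < f a (y a) := by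
      by_contra hcon
      push_neg at hcon
      have := psiKL_mono hm hτ ((hfA a ha).1 (y a))
        (by nlinarith)
      linarith
    have h6 : f a (y a) ≤ MSP (f a) :=
      le_ciSup (Set.Finite.bddAbove (Set.finite_range (f a))) (y a)
    linarith
  -- each b ∈ B has small MSP
  have hB_small : ∀ b ∈ B, MSP (f b) < τ := by
    intro b hb
    have h1 : lam * h b ≤ lam * ∑ x ∈ B, h x :=
      mul_le_mul_of_nonneg_left (Finset.single_le_sum hh_nonneg hb) hlam.le
    have h2 : lam * h b < lam * psiKL u τ := by
      calc lam * h b ≤ lam * ∑ x ∈ B, h x := h1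
        _ ≤ ∑ x ∈ A, (1 + lam) * g x + lam * ∑ x ∈ B, h x := by linarith
        _ < min ((1 + lam) * psiKL m τ) (lam * psiKL u τ) := htotal
        _ ≤ lam * psiKL u τ := min_le_right _ _
    have h3 : h b < psiKL u τ := lt_of_mul_lt_mul_left h2 hlam.le
    have h4 : ∀ j : Fin C, f b j < τ := by
      intro j
      by_contra hcon
      push_neg at hcon
      have h5 : psiKL u (f b j) < psiKL u τ := lt_of_le_of_lt (hh_lb b hb j) h3
      have := psiKL_mono hu hτ ((hfB b hb).1 j) (by nlinarith)
      linarith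
    have : Nonempty (Fin C) := ⟨⟨0, hC0⟩⟩
    obtain ⟨j0, hj0⟩ := Finite.exists_max (f b)
    have h6 : MSP (f b) ≤ f b j0 := ciSup_le hj0
    exact lt_of_le_of_lt h6 (h4 j0)
  have hsup : B.sup' hB (fun b => MSP (f b)) < τ :=
    (Finset.sup'_lt_iff hB).mpr hB_small
  have hinf : τ < A.inf' hA (fun a => MSP (f a)) :=
    (Finset.lt_inf'_iff hA).mpr hA_big
  exact lt_trans hsup hinf
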